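/- (Theorem 3.2.) Let K ≥ 2, d ≥ 1, and for each i ∈ {1,…,K} let μ_i ∈ ℝ^d, let Σ_i be a symmetric positive definite d×d real matrix, let r_i > 0, and set S_i = S(μ_i,Σ_i,r_i) and R_i = 2ε/√(λ_min(Σ_i)) + r_i, where ε ≥ 0. Suppose each Gaussian N(μ_i,Σ_i) is (C,ε,δ)-localized on S_i, and suppose that for every i ∈ {1,…,K}, Σ_{j≠i} ℙ_{x∼N(μ_i,Σ_i)}((x−μ_j)ᵀΣ_j⁻¹(x−μ_j) ≤ R_j²) ≤ γ. Then for every i ∈ {1,…,K}, ℙ_{x∼N(μ_i,Σ_i)}(x ∈ ∪_{j≠i} S_j^{+2ε}) ≤ γ; that is, the mixture distribution with these class conditionals is (C,ε,δ,γ)-strongly localized with respect to the ℓ₂ distance. -/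

import Mathlib

open MeasureTheory Matrix Real

/-- The multivariate Gaussian measure `N(μ, Σ)` on `ℝ^d = Fin d → ℝ`, defined via its density
with respect to Lebesgue measure. -/
noncomputable def gaussianMeasure {d : ℕ} (μ : Fin d → ℝ) (S : Matrix (Fin d) (Fin d) ℝ) :
    Measure (Fin d → ℝ) :=
  volume.withDensity fun x =>
    ENNReal.ofReal ((2 * π) ^ (-(d : ℝ) / 2) * S.det ^ (-(1 : ℝ) / 2) *
      Real.exp (-(1 / 2) * ((x - μ) ⬝ᵥ (S⁻¹ *ᵥ (x - μ)))))

/-- A measure `p` on `ℝ^d` is `(C, ε, δ)`-localized on a set `A` if `p(A) ≥ 1 - δ` and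
`Vol(A) ≤ C · exp(-ε)`. -/
def IsLocalized {d : ℕ} (p : Measure (Fin d → ℝ)) (C ε δ : ℝ) (A : Set (Fin d → ℝ)) : Prop :=
  ENNReal.ofReal (1 - δ) ≤ p A ∧ volume A ≤ ENNReal.ofReal (C * Real.exp (-ε))

/-- The Euclidean (ℓ₂) norm of a vector in `Fin d → ℝ`. -/
noncomputable def l2norm {d : ℕ} (v : Fin d → ℝ) : ℝ :=
  Real.sqrt (v ⬝ᵥ v)

/-- The Mahalanobis ellipsoid `S(μ, Σ, r) = {x : (x-μ)ᵀ Σ⁻¹ (x-μ) ≤ r²}`. -/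
def ellipsoid {d : ℕ} (μ : Fin d → ℝ) (S : Matrix (Fin d) (Fin d) ℝ) (r : ℝ) :
    Set (Fin d → ℝ) :=
  {x | (x - μ) ⬝ᵥ (S⁻¹ *ᵥ (x - μ)) ≤ r ^ 2}

/-- The `t`-expansion of a set in the ℓ₂ distance. -/
def expand {d : ℕ} (A : Set (Fin d → ℝ)) (t : ℝ) : Set (Fin d → ℝ) :=
  {x | ∃ s ∈ A, l2norm (x - s) ≤ t}

/-- The smallest eigenvalue of a symmetric matrix, given by the Rayleigh quotient
characterization: the infimum of `vᵀ M v` over unit vectors `v`. -/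
noncomputable def minEig {d : ℕ} (M : Matrix (Fin d) (Fin d) ℝ) : ℝ :=
  ⨅ v : {v : Fin d → ℝ // v ⬝ᵥ v = 1}, (v : Fin d → ℝ) ⬝ᵥ (M *ᵥ (v : Fin d → ℝ))



lemma psd_dot_nonneg {M : Matrix (Fin d) (Fin d) ℝ} (hM : M.PosSemidef) (v : Fin d → ℝ) :
    0 ≤ v ⬝ᵥ (M *ᵥ v) := by
  simpa using hM.dotProduct_mulVec_nonneg v

lemma dot_self_nonneg (v : Fin d → ℝ) : 0 ≤ v ⬝ᵥ v :=
  Finset.sum_nonneg fun i _ => mul_self_nonneg _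

lemma psd_cauchy {M : Matrix (Fin d) (Fin d) ℝ} (hM : M.PosSemidef) (u v : Fin d → ℝ) :
    (u ⬝ᵥ (M *ᵥ v)) ^ 2 ≤ (u ⬝ᵥ (M *ᵥ u)) * (v ⬝ᵥ (M *ᵥ v)) := by
  obtain ⟨B, rfl⟩ : ∃ B : Matrix (Fin d) (Fin d) ℝ, M = Bᴴ * B := by
    open scoped MatrixOrder in
    obtain ⟨B, hB⟩ := CStarAlgebra.nonneg_iff_eq_star_mul_self.mp hM.nonneg
    exact ⟨B, hB⟩
  have key : ∀ a b : Fin d → ℝ, a ⬝ᵥ ((Bᴴ * B) *ᵥ b) = (B *ᵥ a) ⬝ᵥ (B *ᵥ b) := by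
    intro a b
    rw [← Matrix.mulVec_mulVec, Matrix.dotProduct_mulVec, Matrix.vecMul_conjTranspose]
    simp
  rw [key, key, key]
  simpa [dotProduct, pow_two] using
    Finset.sum_mul_sq_le_sq_mul_sq Finset.univ (B *ᵥ u) (B *ᵥ v)

lemma minEig_pos {M : Matrix (Fin d) (Fin d) ℝ} (hd : 1 ≤ d) (hM : M.PosDef) :
    0 < minEig M := by
  classical
  set f : (Fin d → ℝ) → ℝ := fun v => v ⬝ᵥ (M *ᵥ v) with hf
  have hcont : Continuous f := by
    have hfe : f = fun v => ∑ i, v i * ∑ j, M i j * v j := by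
      ext v; simp [hf, Matrix.mulVec, dotProduct]
    rw [hfe]
    apply continuous_finset_sum
    intro i _
    exact (continuous_apply i).mul
      (continuous_finset_sum _ fun j _ => continuous_const.mul (continuous_apply j))
  set sph : Set (Fin d → ℝ) := {v | v ⬝ᵥ v = 1} with hsph
  have hclosed : IsClosed sph := isClosed_eq (by
    apply continuous_finset_sum; intro i _;
    exact (continuous_apply i).mul (continuous_apply i)) continuous_const
  have hsub : sph ⊆ Metric.closedBall 0 1 := by
    intro v hv
    rw [Metric.mem_closedBall, dist_zero_right]
    rw [pi_norm_le_iff_of_nonneg zero_le_one]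
    intro i
    have h1 : v i * v i ≤ v ⬝ᵥ v := by
      apply Finset.single_le_sum (f := fun j => v j * v j)
        (fun j _ => mul_self_nonneg _) (Finset.mem_univ i)
    rw [hv] at h1
    rw [Real.norm_eq_abs, abs_le]
    constructor <;> nlinarith
  have hcmp : IsCompact sph :=
    (isCompact_closedBall (0 : Fin d → ℝ) 1).of_isClosed_subset hclosed hsub
  have hne : sph.Nonempty := by
    refine ⟨Pi.single ⟨0, hd⟩ 1, ?_⟩
    simp [hsph, single_dotProduct]
  obtain ⟨v₀, hv₀, hmin⟩ := hcmp.exists_isMinOn hne hcont.continuousOn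
  have hv₀ne : v₀ ≠ 0 := by
    intro h
    rw [hsph] at hv₀; simp only [Set.mem_setOf_eq, h] at hv₀
    simp [zero_dotProduct] at hv₀
  have hfv₀ : 0 < f v₀ := by simpa using hM.dotProduct_mulVec_pos hv₀ne
  have hne' : Nonempty {v : Fin d → ℝ // v ⬝ᵥ v = 1} := ⟨⟨v₀, hv₀⟩⟩
  have : f v₀ ≤ minEig M := by
    apply le_ciInf
    intro w
    exact hmin w.2
  linarith

lemma minEig_mul_le {M : Matrix (Fin d) (Fin d) ℝ} (hd : 1 ≤ d) (hM : M.PosDef)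
    (v : Fin d → ℝ) : minEig M * (v ⬝ᵥ v) ≤ v ⬝ᵥ (M *ᵥ v) := by
  classical
  rcases eq_or_ne v 0 with rfl | hv
  · simp
  have hbdd : BddBelow (Set.range fun w : {v : Fin d → ℝ // v ⬝ᵥ v = 1} =>
      (w : Fin d → ℝ) ⬝ᵥ (M *ᵥ (w : Fin d → ℝ))) := by
    refine ⟨0, ?_⟩
    rintro x ⟨w, rfl⟩
    exact psd_dot_nonneg hM.posSemidef _
  have hn : 0 < v ⬝ᵥ v := by
    rcases (dot_self_nonneg v).lt_or_eq with h | h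
    · exact h
    · exact absurd ((dotProduct_self_eq_zero).mp h.symm) hv
  set c : ℝ := (Real.sqrt (v ⬝ᵥ v))⁻¹ with hc
  have hsq : Real.sqrt (v ⬝ᵥ v) * Real.sqrt (v ⬝ᵥ v) = v ⬝ᵥ v :=
    Real.mul_self_sqrt hn.le
  have hs : 0 < Real.sqrt (v ⬝ᵥ v) := Real.sqrt_pos.mpr hn
  have hw : (c • v) ⬝ᵥ (c • v) = 1 := by
    rw [smul_dotProduct, dotProduct_smul]
    simp only [smul_eq_mul]
    rw [← mul_assoc, hc, ← mul_inv, hsq, inv_mul_cancel₀ hn.ne']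
  have hle : minEig M ≤ (c • v) ⬝ᵥ (M *ᵥ (c • v)) :=
    ciInf_le hbdd ⟨c • v, hw⟩
  rw [smul_dotProduct, Matrix.mulVec_smul, dotProduct_smul] at hle
  have hcc : c * c = (v ⬝ᵥ v)⁻¹ := by
    rw [hc, ← mul_inv]; rw [hsq]
  have := mul_le_mul_of_nonneg_right hle hn.le
  calc minEig M * (v ⬝ᵥ v) ≤ c • (c • (v ⬝ᵥ (M *ᵥ v))) * (v ⬝ᵥ v) := this
    _ = v ⬝ᵥ (M *ᵥ v) := by
        simp only [smul_eq_mul]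
        rw [show c * (c * (v ⬝ᵥ M *ᵥ v)) * (v ⬝ᵥ v) = (c*c) * (v ⬝ᵥ v) * (v ⬝ᵥ M *ᵥ v) by ring,
          hcc, inv_mul_cancel₀ hn.ne', one_mul]

lemma inv_quad_le {M : Matrix (Fin d) (Fin d) ℝ} (hd : 1 ≤ d) (hM : M.PosDef)
    (w : Fin d → ℝ) : w ⬝ᵥ (M⁻¹ *ᵥ w) ≤ (w ⬝ᵥ w) / minEig M := by
  classical
  have hm : 0 < minEig M := minEig_pos hd hM
  set u : Fin d → ℝ := M⁻¹ *ᵥ w with hu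
  have hMu : M *ᵥ u = w := by
    rw [hu, Matrix.mulVec_mulVec, Matrix.mul_nonsing_inv _
      (isUnit_iff_ne_zero.mpr hM.det_pos.ne'), Matrix.one_mulVec]
  set q : ℝ := w ⬝ᵥ (M⁻¹ *ᵥ w) with hq
  have hq0 : 0 ≤ q := psd_dot_nonneg hM.inv.posSemidef w
  have huw : u ⬝ᵥ w = q := by rw [hq, hu, dotProduct_comm]
  have h1 : minEig M * (u ⬝ᵥ u) ≤ q := by
    have := minEig_mul_le hd hM u
    rw [hMu, huw] at this
    exact this
  have h2 : (u ⬝ᵥ w) ^ 2 ≤ (u ⬝ᵥ u) * (w ⬝ᵥ w) := by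
    simpa [dotProduct, pow_two] using
      Finset.sum_mul_sq_le_sq_mul_sq Finset.univ u w
  rw [huw] at h2
  rw [le_div_iff₀ hm]
  rcases hq0.lt_or_eq with hqpos | hq0'
  · have huu : 0 ≤ u ⬝ᵥ u := dot_self_nonneg u
    have hww : 0 ≤ w ⬝ᵥ w := dot_self_nonneg w
    nlinarith
  · rw [← hq0']
    simp only [zero_mul]
    exact dot_self_nonneg w

lemma psd_triangle {M : Matrix (Fin d) (Fin d) ℝ} (hM : M.PosSemidef) (u v : Fin d → ℝ) :
    Real.sqrt ((u + v) ⬝ᵥ (M *ᵥ (u + v))) ≤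
      Real.sqrt (u ⬝ᵥ (M *ᵥ u)) + Real.sqrt (v ⬝ᵥ (M *ᵥ v)) := by
  set qu := u ⬝ᵥ (M *ᵥ u) with hqu
  set qv := v ⬝ᵥ (M *ᵥ v) with hqv
  have hqu0 : 0 ≤ qu := psd_dot_nonneg hM u
  have hqv0 : 0 ≤ qv := psd_dot_nonneg hM v
  have hcross : u ⬝ᵥ (M *ᵥ v) ≤ Real.sqrt qu * Real.sqrt qv := by
    have h := psd_cauchy hM u v
    calc u ⬝ᵥ (M *ᵥ v) ≤ |u ⬝ᵥ (M *ᵥ v)| := le_abs_self _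
      _ = Real.sqrt ((u ⬝ᵥ (M *ᵥ v)) ^ 2) := (Real.sqrt_sq_eq_abs _).symm
      _ ≤ Real.sqrt (qu * qv) := Real.sqrt_le_sqrt h
      _ = Real.sqrt qu * Real.sqrt qv := Real.sqrt_mul hqu0 _
  have hcross' : v ⬝ᵥ (M *ᵥ u) ≤ Real.sqrt qu * Real.sqrt qv := by
    have h := psd_cauchy hM v u
    calc v ⬝ᵥ (M *ᵥ u) ≤ |v ⬝ᵥ (M *ᵥ u)| := le_abs_self _
      _ = Real.sqrt ((v ⬝ᵥ (M *ᵥ u)) ^ 2) := (Real.sqrt_sq_eq_abs _).symm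
      _ ≤ Real.sqrt (qv * qu) := Real.sqrt_le_sqrt h
      _ = Real.sqrt qu * Real.sqrt qv := by rw [mul_comm]; exact Real.sqrt_mul hqu0 _
  have hexp : (u + v) ⬝ᵥ (M *ᵥ (u + v)) =
      qu + (u ⬝ᵥ (M *ᵥ v) + v ⬝ᵥ (M *ᵥ u)) + qv := by
    rw [Matrix.mulVec_add, add_dotProduct, dotProduct_add,
      dotProduct_add]
    ring
  have hle : (u + v) ⬝ᵥ (M *ᵥ (u + v)) ≤ (Real.sqrt qu + Real.sqrt qv) ^ 2 := by
    rw [hexp]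
    have h1 : qu = Real.sqrt qu ^ 2 := (Real.sq_sqrt hqu0).symm
    have h2 : qv = Real.sqrt qv ^ 2 := (Real.sq_sqrt hqv0).symm
    nlinarith
  calc Real.sqrt ((u + v) ⬝ᵥ (M *ᵥ (u + v))) ≤
      Real.sqrt ((Real.sqrt qu + Real.sqrt qv) ^ 2) := Real.sqrt_le_sqrt hle
    _ = Real.sqrt qu + Real.sqrt qv := Real.sqrt_sq (by positivity)

lemma expand_subset {d : ℕ} {μ : Fin d → ℝ} {M : Matrix (Fin d) (Fin d) ℝ} (hd : 1 ≤ d)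
    (hM : M.PosDef) {r ε : ℝ} (hr : 0 ≤ r) (hε : 0 ≤ ε) :
    expand (ellipsoid μ M r) (2 * ε) ⊆ ellipsoid μ M (2 * ε / Real.sqrt (minEig M) + r) := by
  rintro x ⟨s, hs, hxs⟩
  have hm : 0 < minEig M := minEig_pos hd hM
  have hsqm : 0 < Real.sqrt (minEig M) := Real.sqrt_pos.mpr hm
  have hPSDinv : (M⁻¹).PosSemidef := hM.inv.posSemidef
  have hsplit : x - μ = (x - s) + (s - μ) := by abel
  have h1 : (x - s) ⬝ᵥ (M⁻¹ *ᵥ (x - s)) ≤ ((x - s) ⬝ᵥ (x - s)) / minEig M :=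
    inv_quad_le hd hM _
  have h2 : Real.sqrt ((x - s) ⬝ᵥ (M⁻¹ *ᵥ (x - s))) ≤ 2 * ε / Real.sqrt (minEig M) := by
    calc Real.sqrt ((x - s) ⬝ᵥ (M⁻¹ *ᵥ (x - s)))
        ≤ Real.sqrt (((x - s) ⬝ᵥ (x - s)) / minEig M) := Real.sqrt_le_sqrt h1
      _ = Real.sqrt ((x - s) ⬝ᵥ (x - s)) / Real.sqrt (minEig M) :=
          Real.sqrt_div (dot_self_nonneg _) _
      _ ≤ 2 * ε / Real.sqrt (minEig M) := by
          exact (div_le_div_iff_of_pos_right hsqm).mpr hxs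
  have h3 : Real.sqrt ((s - μ) ⬝ᵥ (M⁻¹ *ᵥ (s - μ))) ≤ r := by
    calc Real.sqrt ((s - μ) ⬝ᵥ (M⁻¹ *ᵥ (s - μ))) ≤ Real.sqrt (r ^ 2) :=
          Real.sqrt_le_sqrt hs
      _ = r := Real.sqrt_sq hr
  have hQ0 : 0 ≤ (x - μ) ⬝ᵥ (M⁻¹ *ᵥ (x - μ)) := psd_dot_nonneg hPSDinv _
  have hkey : Real.sqrt ((x - μ) ⬝ᵥ (M⁻¹ *ᵥ (x - μ))) ≤
      2 * ε / Real.sqrt (minEig M) + r := by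
    rw [hsplit]
    exact (psd_triangle hPSDinv _ _).trans (add_le_add h2 h3)
  show (x - μ) ⬝ᵥ (M⁻¹ *ᵥ (x - μ)) ≤ (2 * ε / Real.sqrt (minEig M) + r) ^ 2
  calc (x - μ) ⬝ᵥ (M⁻¹ *ᵥ (x - μ))
      = (Real.sqrt ((x - μ) ⬝ᵥ (M⁻¹ *ᵥ (x - μ)))) ^ 2 := (Real.sq_sqrt hQ0).symm
    _ ≤ (2 * ε / Real.sqrt (minEig M) + r) ^ 2 :=
        pow_le_pow_left₀ (Real.sqrt_nonneg _) hkey 2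

theorem stmt4 {K d : ℕ} (hK : 2 ≤ K) (hd : 1 ≤ d)
    (μ : Fin K → Fin d → ℝ) (S : Fin K → Matrix (Fin d) (Fin d) ℝ)
    (hS : ∀ i, (S i).PosDef) (r : Fin K → ℝ) (hr : ∀ i, 0 < r i)
    (C ε δ γ : ℝ) (hε : 0 ≤ ε) (hγ : 0 ≤ γ)
    (R : Fin K → ℝ) (hR : ∀ i, R i = 2 * ε / Real.sqrt (minEig (S i)) + r i)
    (hloc : ∀ i, IsLocalized (gaussianMeasure (μ i) (S i)) C ε δ
      (ellipsoid (μ i) (S i) (r i)))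
    (hsum : ∀ i, ∑ j ∈ Finset.univ.erase i,
      gaussianMeasure (μ i) (S i) (ellipsoid (μ j) (S j) (R j)) ≤ ENNReal.ofReal γ) :
    ∀ i, gaussianMeasure (μ i) (S i)
        (⋃ j ∈ Finset.univ.erase i, expand (ellipsoid (μ j) (S j) (r j)) (2 * ε)) ≤
      ENNReal.ofReal γ := by
  intro i
  refine le_trans ?_ (hsum i)
  refine le_trans (measure_biUnion_finset_le _ _) ?_
  apply Finset.sum_le_sum
  intro j hj
  apply measure_mono
  rw [hR j]
  exact expand_subset hd (hS j) (hr j).le hε
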